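/- For β > 0, the Stieltjes transform G(z) = ∫ dμ(t)/(z−t) of the Marchenko–Pastur measure μ with parameter β satisfies G(z) = (1/(2z))·[1 − β + z − √((1 − β + z)² − 4z)] for real z greater than the upper edge (√β + 1)² of the support, where the square root is taken positive. -/

import Mathlib

open Real MeasureTheory intervalIntegral Set


lemma core_pos (p : ℝ) (hp : 1 < p) :
    ∫ s in (-1:ℝ)..1, Real.sqrt (1 - s^2) / (p - s)
      = Real.pi * (p - Real.sqrt (p^2 - 1)) := by
  have hp2 : (0:ℝ) < p^2 - 1 := by nlinarith
  set q := Real.sqrt (p^2 - 1) with hq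
  have hq2 : q^2 = p^2 - 1 := Real.sq_sqrt hp2.le
  have hqpos : 0 < q := Real.sqrt_pos.2 hp2
  set F : ℝ → ℝ := fun s => p * Real.arcsin s - Real.sqrt (1 - s^2)
      - q * Real.arcsin ((p*s - 1)/(p - s)) with hF
  have hcont : ContinuousOn F (Set.Icc (-1:ℝ) 1) := by
    apply ContinuousOn.sub
    apply ContinuousOn.sub
    · exact (continuousOn_const.mul (Real.continuous_arcsin.continuousOn))
    · exact ((continuous_const.sub (continuous_pow 2)).sqrt).continuousOn
    · apply continuousOn_const.mul
      apply Real.continuous_arcsin.comp_continuousOn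
      apply ContinuousOn.div
      · fun_prop
      · fun_prop
      · intro s hs
        have : s ≤ 1 := hs.2
        nlinarith [hs.1]
  have hderiv : ∀ s ∈ Set.Ioo (-1:ℝ) 1,
      HasDerivAt F (Real.sqrt (1 - s^2) / (p - s)) s := by
    intro s hs
    have hs1 : -1 < s := hs.1
    have hs2 : s < 1 := hs.2
    have hps : 0 < p - s := by linarith
    have h1s : 0 < 1 - s^2 := by nlinarith
    have hsq : 0 < Real.sqrt (1 - s^2) := Real.sqrt_pos.2 h1s
    have hsqsq : Real.sqrt (1 - s^2) ^ 2 = 1 - s^2 := Real.sq_sqrt h1s.le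
    -- derivative of arcsin
    have d1 : HasDerivAt Real.arcsin (1 / Real.sqrt (1 - s^2)) s :=
      Real.hasDerivAt_arcsin (by linarith) (by linarith)
    -- derivative of sqrt(1 - s^2)
    have d2 : HasDerivAt (fun s : ℝ => Real.sqrt (1 - s^2)) (-s / Real.sqrt (1 - s^2)) s := by
      have inner : HasDerivAt (fun s : ℝ => 1 - s^2) (-(2*s)) s := by
        simpa using ((hasDerivAt_pow 2 s).const_sub 1)
      have := (Real.hasDerivAt_sqrt h1s.ne').comp s inner
      refine this.congr_deriv ?_
      field_simp
    -- derivative of u = (p*s-1)/(p-s)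
    set u := (p*s - 1)/(p - s) with hu
    have du : HasDerivAt (fun s : ℝ => (p*s - 1)/(p - s)) ((p^2 - 1)/(p - s)^2) s := by
      have dn : HasDerivAt (fun s : ℝ => p*s - 1) p s := by
        simpa using ((hasDerivAt_id s).const_mul p).sub_const 1
      have dd : HasDerivAt (fun s : ℝ => p - s) (-1) s := by
        simpa using (hasDerivAt_id s).const_sub p
      have := dn.div dd hps.ne'
      refine this.congr_deriv ?_
      field_simp
      ring
    have h1u : 1 - u^2 = (p^2-1)*(1-s^2)/(p-s)^2 := by
      rw [hu]; field_simp; ring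
    have h1upos : 0 < 1 - u^2 := by
      rw [h1u]; positivity
    have hsu : Real.sqrt (1 - u^2) = q * Real.sqrt (1-s^2) / (p - s) := by
      rw [h1u]
      rw [show (p^2-1)*(1-s^2)/(p-s)^2 = (q * Real.sqrt (1-s^2) / (p-s))^2 by
        rw [div_pow, mul_pow, hq2, hsqsq]]
      exact Real.sqrt_sq (by positivity)
    have d3 : HasDerivAt (fun s : ℝ => Real.arcsin ((p*s - 1)/(p - s)))
        ((1 / Real.sqrt (1 - u^2)) * ((p^2 - 1)/(p - s)^2)) s := by
      have da : HasDerivAt Real.arcsin (1 / Real.sqrt (1 - u^2)) u :=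
        Real.hasDerivAt_arcsin (by nlinarith) (by nlinarith)
      exact da.comp s du
    have : HasDerivAt F
        (p * (1 / Real.sqrt (1 - s^2)) - (-s / Real.sqrt (1 - s^2))
          - q * ((1 / Real.sqrt (1 - u^2)) * ((p^2 - 1)/(p - s)^2))) s :=
      ((d1.const_mul p).sub d2).sub (d3.const_mul q)
    convert this using 1
    rw [hsu]
    field_simp
    linear_combination 1 * hsqsq
  have hint : IntervalIntegrable (fun s => Real.sqrt (1 - s^2) / (p - s)) volume (-1) 1 := by
    apply ContinuousOn.intervalIntegrable
    apply ContinuousOn.div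
    · fun_prop
    · fun_prop
    · intro s hs
      rw [Set.uIcc_of_le (by norm_num : (-1:ℝ) ≤ 1)] at hs
      have : s ≤ 1 := hs.2
      nlinarith
  rw [intervalIntegral.integral_eq_sub_of_hasDerivAt_of_le (by norm_num) hcont hderiv hint]
  have e1 : F 1 = p * (Real.pi/2) - q * (Real.pi/2) := by
    simp only [hF]
    rw [show (1:ℝ) - 1^2 = 0 by ring, Real.sqrt_zero]
    rw [show (p*1-1)/(p-1) = 1 from by rw [mul_one]; exact div_self (by linarith), Real.arcsin_one]
    ring
  have e2 : F (-1) = -(p * (Real.pi/2)) + q * (Real.pi/2) := by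
    simp only [hF]
    rw [show (1:ℝ) - (-1:ℝ)^2 = 0 by ring, Real.sqrt_zero]
    rw [show (p*(-1)-1)/(p-(-1)) = -1 from by rw [div_eq_iff (by linarith)]; ring, Real.arcsin_neg, Real.arcsin_one]
    ring
  rw [e1, e2]; ring

lemma core_neg (p : ℝ) (hp : p < -1) :
    ∫ s in (-1:ℝ)..1, Real.sqrt (1 - s^2) / (p - s)
      = Real.pi * (p + Real.sqrt (p^2 - 1)) := by
  have h2 : (∫ s in (-1:ℝ)..1, Real.sqrt (1 - (-s)^2) / ((-p) - (-s)))
      = ∫ x in (-1:ℝ)..1, Real.sqrt (1 - x^2) / ((-p) - x) := by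
    rw [intervalIntegral.integral_comp_neg (fun x => Real.sqrt (1 - x^2) / ((-p) - x))]
    norm_num
  calc ∫ s in (-1:ℝ)..1, Real.sqrt (1 - s^2) / (p - s)
      = ∫ s in (-1:ℝ)..1, -(Real.sqrt (1 - (-s)^2) / ((-p) - (-s))) := by
        apply intervalIntegral.integral_congr
        intro s _
        simp only [neg_sq]
        rw [show (-p) - (-s) = -(p - s) by ring, div_neg, neg_neg]
    _ = -∫ s in (-1:ℝ)..1, Real.sqrt (1 - (-s)^2) / ((-p) - (-s)) :=
        intervalIntegral.integral_neg
    _ = -(Real.pi * ((-p) - Real.sqrt ((-p)^2 - 1))) := by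
        rw [h2, core_pos (-p) (by linarith)]
    _ = Real.pi * (p + Real.sqrt (p^2 - 1)) := by rw [neg_sq]; ring

lemma affine (a b c : ℝ) (hab : a < b) :
    ∫ x in a..b, Real.sqrt ((b - x)*(x - a))/(c - x)
      = ((b-a)/2) * ∫ s in (-1:ℝ)..1, Real.sqrt (1 - s^2) / ((c - (a+b)/2)/((b-a)/2) - s) := by
  set r := (b-a)/2 with hr
  set m := (a+b)/2 with hm
  set p := (c - m)/r with hp
  have hrpos : 0 < r := by rw [hr]; linarith
  have hrp : r * p = c - m := by rw [hp]; field_simp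
  have key : ∀ s : ℝ, (fun x => Real.sqrt ((b - x)*(x - a))/(c - x)) (r * s + m)
      = Real.sqrt (1 - s^2) / (p - s) := by
    intro s
    have e1 : (b - (r*s+m))*((r*s+m) - a) = r^2 * (1 - s^2) := by
      rw [hr, hm]; ring
    have e2 : c - (r*s+m) = r * (p - s) := by
      rw [mul_sub, hrp]; ring
    simp only [e1, e2]
    rw [Real.sqrt_mul (sq_nonneg r), Real.sqrt_sq hrpos.le, mul_div_mul_left _ _ hrpos.ne']
  have := intervalIntegral.integral_comp_mul_add
    (fun x => Real.sqrt ((b - x)*(x - a))/(c - x)) hrpos.ne' m (a := -1) (b := 1)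
  rw [show r * (-1) + m = a by rw [hr, hm]; ring, show r * 1 + m = b by rw [hr, hm]; ring] at this
  rw [show ∫ s in (-1:ℝ)..1, Real.sqrt (1 - s^2) / ((c - (a+b)/2)/((b-a)/2) - s)
      = ∫ s in (-1:ℝ)..1, (fun x => Real.sqrt ((b - x)*(x - a))/(c - x)) (r * s + m) from
    intervalIntegral.integral_congr fun s _ => (key s).symm]
  rw [this, smul_eq_mul, ← mul_assoc, mul_inv_cancel₀ hrpos.ne', one_mul]

lemma rsqrt (a b c r : ℝ) (hab : a < b) (hr : r = (b-a)/2) :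
    r * Real.sqrt (((c - (a+b)/2)/r)^2 - 1) = Real.sqrt ((c - a)*(c - b)) := by
  have hrpos : 0 < r := by rw [hr]; linarith
  have key : (c-a)*(c-b) = r^2 * (((c - (a+b)/2)/r)^2 - 1) := by
    have h2 : r^2 * (((c - (a+b)/2)/r)^2 - 1) = (c - (a+b)/2)^2 - r^2 := by
      field_simp
    rw [h2, hr]; ring
  rw [key, Real.sqrt_mul (sq_nonneg r), Real.sqrt_sq hrpos.le]

lemma sqrtint_above (a b c : ℝ) (hab : a < b) (hc : b < c) :
    ∫ x in a..b, Real.sqrt ((b - x)*(x - a))/(c - x)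
      = Real.pi * ((c - (a+b)/2) - Real.sqrt ((c - a)*(c - b))) := by
  set r := (b-a)/2 with hr
  have hrpos : 0 < r := by rw [hr]; linarith
  have hp : 1 < (c - (a+b)/2)/r := by
    rw [lt_div_iff₀ hrpos, hr]; linarith
  rw [affine a b c hab, ← hr, core_pos _ hp]
  have := rsqrt a b c r hab hr
  have hrp : r * ((c - (a+b)/2)/r) = c - (a+b)/2 := by
    rw [mul_comm, div_mul_cancel₀ _ hrpos.ne']
  calc r * (Real.pi * ((c - (a+b)/2)/r - Real.sqrt (((c - (a+b)/2)/r)^2 - 1)))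
      = Real.pi * (r * ((c - (a+b)/2)/r) - r * Real.sqrt (((c - (a+b)/2)/r)^2 - 1)) := by ring
    _ = _ := by rw [hrp, this]

lemma sqrtint_below (a b c : ℝ) (hab : a < b) (hc : c < a) :
    ∫ x in a..b, Real.sqrt ((b - x)*(x - a))/(c - x)
      = Real.pi * ((c - (a+b)/2) + Real.sqrt ((c - a)*(c - b))) := by
  set r := (b-a)/2 with hr
  have hrpos : 0 < r := by rw [hr]; linarith
  have hp : (c - (a+b)/2)/r < -1 := by
    rw [div_lt_iff₀ hrpos, hr]; linarith
  rw [affine a b c hab, ← hr, core_neg _ hp]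
  have := rsqrt a b c r hab hr
  have hrp : r * ((c - (a+b)/2)/r) = c - (a+b)/2 := by
    rw [mul_comm, div_mul_cancel₀ _ hrpos.ne']
  calc r * (Real.pi * ((c - (a+b)/2)/r + Real.sqrt (((c - (a+b)/2)/r)^2 - 1)))
      = Real.pi * (r * ((c - (a+b)/2)/r) + r * Real.sqrt (((c - (a+b)/2)/r)^2 - 1)) := by ring
    _ = _ := by rw [hrp, this]

lemma int_zero_case (b : ℝ) (hb : 0 < b) :
    IntervalIntegrable (fun x => Real.sqrt ((b - x)*(x - 0))/x) volume 0 b ∧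
    ∫ x in (0:ℝ)..b, Real.sqrt ((b - x)*(x - 0))/x = Real.pi * b / 2 := by
  set G : ℝ → ℝ := fun x => (b/2) * Real.arcsin ((2*x - b)/b) + Real.sqrt ((b - x)*x) with hG
  have hcont : ContinuousOn G (Set.Icc 0 b) := by
    apply Continuous.continuousOn
    apply Continuous.add
    · exact continuous_const.mul (Real.continuous_arcsin.comp (by fun_prop))
    · exact ((continuous_const.sub continuous_id).mul continuous_id).sqrt
  have hderiv : ∀ x ∈ Set.Ioo (0:ℝ) b,
      HasDerivAt G (Real.sqrt ((b - x)*(x - 0))/x) x := by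
    intro x hx
    have hx0 : 0 < x := hx.1
    have hxb : x < b := hx.2
    have hw2 : 0 < (b - x) * x := by nlinarith
    set w := Real.sqrt ((b-x)*x) with hw
    have hwpos : 0 < w := Real.sqrt_pos.2 hw2
    have hwsq : w^2 = (b-x)*x := Real.sq_sqrt hw2.le
    have d1 : HasDerivAt (fun x : ℝ => (2*x - b)/b) (2/b) x := by
      simpa using (((hasDerivAt_id x).const_mul 2).sub_const b).div_const b
    have hune : -1 < (2*x - b)/b ∧ (2*x - b)/b < 1 := by
      constructor
      · rw [lt_div_iff₀ hb]; linarith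
      · rw [div_lt_iff₀ hb]; linarith
    have da : HasDerivAt Real.arcsin (1/Real.sqrt (1 - ((2*x-b)/b)^2)) ((2*x-b)/b) :=
      Real.hasDerivAt_arcsin (by linarith [hune.1]) (by linarith [hune.2])
    have d2 := da.comp x d1
    have d3 : HasDerivAt (fun x : ℝ => Real.sqrt ((b-x)*x)) ((b - 2*x)/(2*w)) x := by
      have inner : HasDerivAt (fun x : ℝ => (b-x)*x) (b - 2*x) x := by
        have h1 : HasDerivAt (fun x : ℝ => b - x) (-1) x := by
          simpa using (hasDerivAt_id x).const_sub b
        have := h1.mul (hasDerivAt_id x)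
        refine this.congr_deriv ?_
        simp only [id_eq]
        ring
      have := inner.sqrt hw2.ne'
      convert this using 1
    have dG : HasDerivAt G ((b/2) * (1/Real.sqrt (1 - ((2*x-b)/b)^2) * (2/b)) + (b - 2*x)/(2*w)) x :=
      (d2.const_mul (b/2)).add d3
    have hsu : Real.sqrt (1 - ((2*x-b)/b)^2) = 2*w/b := by
      rw [show 1 - ((2*x-b)/b)^2 = (2*w/b)^2 from by
        field_simp
        linear_combination (-4)*hwsq]
      exact Real.sqrt_sq (by positivity)
    convert dG using 1
    rw [hsu, sub_zero, ← hw]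
    field_simp
    linear_combination 2 * hwsq
  have hpos : ∀ x ∈ Set.Ioo (0:ℝ) b, 0 ≤ Real.sqrt ((b - x)*(x - 0))/x := by
    intro x hx
    have := hx.1
    positivity
  have hint : IntervalIntegrable (fun x => Real.sqrt ((b - x)*(x - 0))/x) volume 0 b := by
    apply intervalIntegrable_deriv_of_nonneg
    · rw [Set.uIcc_of_le hb.le]; exact hcont
    · rw [min_eq_left hb.le, max_eq_right hb.le]; exact hderiv
    · rw [min_eq_left hb.le, max_eq_right hb.le]; exact hpos
  refine ⟨hint, ?_⟩
  rw [integral_eq_sub_of_hasDerivAt_of_le hb.le hcont hderiv hint]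
  have e1 : G b = b/2 * (Real.pi/2) := by
    simp only [hG]
    rw [show (2*b - b)/b = 1 from by rw [show 2*b - b = b by ring]; exact div_self hb.ne',
      Real.arcsin_one, show (b - b)*b = 0 by ring, Real.sqrt_zero]
    ring
  have e2 : G 0 = -(b/2 * (Real.pi/2)) := by
    simp only [hG]
    rw [show (2*0 - b)/b = -1 from by rw [show 2*0 - b = -b by ring, neg_div, div_self hb.ne'],
      Real.arcsin_neg, Real.arcsin_one, show (b - 0)*0 = (0:ℝ) by ring, Real.sqrt_zero]
    ring
  rw [e1, e2]; ring

lemma int_inv_x (a b : ℝ) (ha : 0 ≤ a) (hab : a < b) :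
    IntervalIntegrable (fun x => Real.sqrt ((b - x)*(x - a))/x) volume a b ∧
    ∫ x in a..b, Real.sqrt ((b - x)*(x - a))/x
      = Real.pi * ((a+b)/2 - Real.sqrt (a*b)) := by
  rcases eq_or_lt_of_le ha with h0|h0
  · subst h0
    obtain ⟨hint, hval⟩ := int_zero_case b (by linarith)
    refine ⟨hint, ?_⟩
    rw [hval, show (0:ℝ)*b = 0 by ring, Real.sqrt_zero]
    ring
  · constructor
    · apply ContinuousOn.intervalIntegrable
      apply ContinuousOn.div
      · fun_prop
      · fun_prop
      · intro x hx
        rw [Set.uIcc_of_le hab.le] at hx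
        have := hx.1
        intro h; rw [h] at this; linarith
    have key := sqrtint_below a b 0 hab h0
    have flip : ∫ x in a..b, Real.sqrt ((b - x)*(x - a))/x
        = -∫ x in a..b, Real.sqrt ((b - x)*(x - a))/(0 - x) := by
      rw [← intervalIntegral.integral_neg]
      apply intervalIntegral.integral_congr
      intro x _
      simp only [zero_sub, div_neg, neg_neg]
    rw [flip, key, show (0-a)*(0-b) = a*b by ring]
    ring

theorem stmt11 (β : ℝ) (hβ : 0 < β) (z : ℝ) (hz : (Real.sqrt β + 1) ^ 2 < z) :
    (∫ x in Set.Icc ((Real.sqrt β - 1) ^ 2) ((Real.sqrt β + 1) ^ 2),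
        (1 / (2 * Real.pi * x)) * Real.sqrt (4 * β - (β + 1 - x) ^ 2) / (z - x)) +
      max (1 - β) 0 / z =
    (1 / (2 * z)) * (1 - β + z - Real.sqrt ((1 - β + z) ^ 2 - 4 * z)) := by
  have hsbpos : 0 < Real.sqrt β := Real.sqrt_pos.2 hβ
  have hsb2 : Real.sqrt β ^ 2 = β := Real.sq_sqrt hβ.le
  set sb := Real.sqrt β with hsb
  set a := (sb - 1)^2 with ha
  set b := (sb + 1)^2 with hb
  have ha0 : 0 ≤ a := sq_nonneg _
  have hab : a < b := by rw [ha, hb]; nlinarith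
  have hbpos : 0 < b := by rw [hb]; positivity
  have hbz : b < z := hz
  have hzpos : 0 < z := lt_trans hbpos hbz
  have hπ : 0 < Real.pi := Real.pi_pos
  -- rewrite the argument of sqrt
  have harg : ∀ x : ℝ, 4 * β - (β + 1 - x) ^ 2 = (b - x)*(x - a) := by
    intro x
    rw [ha, hb]
    linear_combination (β + sb^2 - 2 - 2*x) * hsb2
  -- step 1 : set integral to interval integral
  rw [show Set.Icc ((Real.sqrt β - 1) ^ 2) ((Real.sqrt β + 1) ^ 2) = Set.Icc a b from rfl]
  rw [MeasureTheory.integral_Icc_eq_integral_Ioc,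
    ← intervalIntegral.integral_of_le hab.le]
  -- step 2 : partial fractions
  have key : ∀ x ∈ Set.uIcc a b,
      (1 / (2 * Real.pi * x)) * Real.sqrt (4 * β - (β + 1 - x) ^ 2) / (z - x)
        = (1/(2*Real.pi*z)) * (Real.sqrt ((b - x)*(x - a))/x
            + Real.sqrt ((b - x)*(x - a))/(z - x)) := by
    intro x hx
    rw [Set.uIcc_of_le hab.le] at hx
    rw [harg x]
    have hxz : z - x ≠ 0 := by have := hx.2; intro h; nlinarith
    by_cases hx0 : x = 0
    · have ha' : a = 0 := le_antisymm (by rw [← hx0]; exact hx.1) ha0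
      rw [hx0, ha']
      norm_num
    · field_simp
      ring
  rw [intervalIntegral.integral_congr key]
  -- step 3 : split
  obtain ⟨hA, hAval⟩ := int_inv_x a b ha0 hab
  have hB : IntervalIntegrable (fun x => Real.sqrt ((b - x)*(x - a))/(z - x)) volume a b := by
    apply ContinuousOn.intervalIntegrable
    apply ContinuousOn.div
    · fun_prop
    · fun_prop
    · intro x hx
      rw [Set.uIcc_of_le hab.le] at hx
      have := hx.2
      intro h; nlinarith
  rw [intervalIntegral.integral_const_mul, intervalIntegral.integral_add hA hB]
  rw [hAval, sqrtint_above a b z hab hbz]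
  -- step 4 : final algebra
  have hsum : a + b = 2*β + 2 := by rw [ha, hb]; linear_combination 2*hsb2
  have hprod : a * b = (β - 1)^2 := by rw [ha, hb]; linear_combination (sb^2 + β - 2)*hsb2
  have hD : (z - a)*(z - b) = (1 - β + z)^2 - 4*z := by
    rw [ha, hb]; linear_combination (sb^2 + β - 2 - 2*z)*hsb2
  rw [hprod, hD, hsum]
  rcases le_total β 1 with hle|hle
  · rw [max_eq_left (by linarith), show Real.sqrt ((β-1)^2) = 1 - β from by
      rw [Real.sqrt_sq_eq_abs, abs_of_nonpos (by linarith)]; ring]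
    field_simp
    ring
  · rw [max_eq_right (by linarith), show Real.sqrt ((β-1)^2) = β - 1 from by
      rw [Real.sqrt_sq_eq_abs, abs_of_nonneg (by linarith)]]
    field_simp
    ring
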